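/- Let A be the 2×2 coloring matrix with rows (1,1) and (1,0). The number of A-colored plane trees on n ≥ 1 vertices whose root has color 1 is (1/n)·binom(3n-2, n-1), and the number with root color 2 is (1/(2n-1))·binom(3n-3, n-1). -/

import Mathlib

inductive CTree (α : Type) : Type
  | node : α → List (CTree α) → CTree α

namespace CTree

def color {α : Type} : CTree α → α
  | node c _ => c

def children {α : Type} : CTree α → List (CTree α)
  | node _ ts => ts

def size {α : Type} : CTree α → ℕ
  | node _ ts => 1 + (ts.attach.map fun t => size t.1).sum
decreasing_by
  have := List.sizeOf_lt_of_mem t.2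
  simp only [CTree.node.sizeOf_spec]
  omega

def Valid {α : Type} (A : Matrix α α ℕ) : CTree α → Prop
  | node c ts => ∀ t ∈ ts, A c t.color = 1 ∧ Valid A t

end CTree

/-- Number of `A`-colored plane trees with `n` vertices and root color `i`. -/
noncomputable def colorCount {m : ℕ} (A : Matrix (Fin m) (Fin m) ℕ) (i : Fin m) (n : ℕ) : ℕ :=
  {t : CTree (Fin m) | t.Valid A ∧ t.size = n ∧ t.color = i}.ncard

/-- Total number of `A`-colored plane trees with `n` vertices. -/
noncomputable def totalCount {α : Type} (A : Matrix α α ℕ) (n : ℕ) : ℕ :=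
  {t : CTree α | t.Valid A ∧ t.size = n}.ncard


namespace CTreeAux

abbrev M2 : Matrix (Fin 2) (Fin 2) ℕ := !![1, 1; 1, 0]

lemma size_node {α : Type} (c : α) (ts : List (CTree α)) :
    (CTree.node c ts).size = 1 + (ts.map CTree.size).sum := by
  rw [CTree.size]
  congr 1
  congr 1
  simp

lemma one_le_size {α : Type} (t : CTree α) : 1 ≤ t.size := by
  cases t with
  | node c ts => rw [size_node]; omega

lemma finite_lists {β : Type} {s : Set β} (hs : s.Finite) (n : ℕ) :
    {l : List β | (∀ x ∈ l, x ∈ s) ∧ l.length ≤ n}.Finite := by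
  have : Finite ↥s := hs.to_subtype
  refine ((List.finite_length_le ↥s n).image (List.map Subtype.val)).subset ?_
  rintro l ⟨h1, h2⟩
  refine ⟨l.attach.map fun x => (⟨x.1, h1 x.1 x.2⟩ : ↥s), by simpa using h2, by simp⟩

lemma finite_size_le : ∀ n : ℕ, {t : CTree (Fin 2) | t.size ≤ n}.Finite := by
  intro n
  induction n with
  | zero =>
    convert Set.finite_empty
    ext t
    simp only [Set.mem_setOf_eq, Set.mem_empty_iff_false, iff_false, not_le]
    have := one_le_size t; omega
  | succ n ih =>
    refine (((Set.finite_univ (α := Fin 2)).prod (finite_lists ih (n+1))).image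
      (fun p : Fin 2 × List (CTree (Fin 2)) => CTree.node p.1 p.2)).subset ?_
    intro t ht
    cases t with
    | node c ts =>
      simp only [Set.mem_setOf_eq] at ht
      rw [size_node] at ht
      refine ⟨(c, ts), ⟨Set.mem_univ _, ?_, ?_⟩, rfl⟩
      · intro x hx
        simp only [Set.mem_setOf_eq]
        have : x.size ≤ (ts.map CTree.size).sum :=
          List.le_sum_of_mem (List.mem_map_of_mem hx)
        omega
      · show ts.length ≤ n + 1
        have h1 : (ts.map CTree.size).length ≤ (ts.map CTree.size).sum :=
          List.length_le_sum_of_one_le _ (by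
            intro i hi
            rcases List.mem_map.mp hi with ⟨x, _, rfl⟩
            exact one_le_size x)
        simp only [List.length_map] at h1
        omega

def Ts (P : CTree (Fin 2) → Prop) (n : ℕ) : Set (CTree (Fin 2)) := {t | P t ∧ t.size = n}

def Ls (P : CTree (Fin 2) → Prop) (n : ℕ) : Set (List (CTree (Fin 2))) :=
  {l | (∀ t ∈ l, P t) ∧ (l.map CTree.size).sum = n}

lemma finite_Ts (P : CTree (Fin 2) → Prop) (n : ℕ) : (Ts P n).Finite :=
  (finite_size_le n).subset (by rintro t ⟨_, h⟩; simp [Set.mem_setOf_eq, h])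

lemma finite_Ls (P : CTree (Fin 2) → Prop) (n : ℕ) : (Ls P n).Finite := by
  refine (finite_lists (finite_size_le n) n).subset ?_
  rintro l ⟨h1, h2⟩
  constructor
  · intro x hx
    have : x.size ≤ (l.map CTree.size).sum := List.le_sum_of_mem (List.mem_map_of_mem hx)
    simp only [Set.mem_setOf_eq]; omega
  · have h3 : (l.map CTree.size).length ≤ (l.map CTree.size).sum :=
      List.length_le_sum_of_one_le _ (by
        intro i hi
        rcases List.mem_map.mp hi with ⟨x, _, rfl⟩
        exact one_le_size x)
    simp only [List.length_map] at h3
    omega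

end CTreeAux

namespace CTreeAux

lemma ncard_prod {α β : Type*} (s : Set α) (t : Set β) :
    (s ×ˢ t).ncard = s.ncard * t.ncard := by
  rw [← Nat.card_coe_set_eq, ← Nat.card_coe_set_eq, ← Nat.card_coe_set_eq,
    ← Nat.card_prod]
  exact Nat.card_congr (Equiv.Set.prod s t)

lemma ncard_biUnion {ι α : Type*} (s : Finset ι) (f : ι → Set α)
    (hf : ∀ i ∈ s, (f i).Finite)
    (hd : ∀ i ∈ s, ∀ j ∈ s, i ≠ j → Disjoint (f i) (f j)) :
    (⋃ i ∈ s, f i).ncard = ∑ i ∈ s, (f i).ncard := by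
  classical
  induction s using Finset.induction with
  | empty => simp
  | @insert a s ha ih =>
    rw [Finset.set_biUnion_insert, Finset.sum_insert ha]
    have hdisj : Disjoint (f a) (⋃ i ∈ s, f i) := by
      refine Set.disjoint_iUnion_right.mpr fun i => Set.disjoint_iUnion_right.mpr fun hi => ?_
      exact hd a (Finset.mem_insert_self a s) i (Finset.mem_insert_of_mem hi)
        (fun h => ha (h ▸ hi))
    rw [Set.ncard_union_eq hdisj (hf a (Finset.mem_insert_self a s))
      (Set.Finite.biUnion s.finite_toSet (fun i hi => hf i (Finset.mem_insert_of_mem hi))),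
      ih (fun i hi => hf i (Finset.mem_insert_of_mem hi))
        (fun i hi j hj hij => hd i (Finset.mem_insert_of_mem hi) j
          (Finset.mem_insert_of_mem hj) hij)]

lemma cons_injective :
    Function.Injective (fun p : CTree (Fin 2) × List (CTree (Fin 2)) => p.1 :: p.2) := by
  rintro ⟨a, b⟩ ⟨c, d⟩ h
  simpa using h

lemma Ls_zero (P : CTree (Fin 2) → Prop) : Ls P 0 = {([] : List (CTree (Fin 2)))} := by
  ext l
  simp only [Ls, Set.mem_setOf_eq, Set.mem_singleton_iff]
  constructor
  · rintro ⟨-, hsum⟩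
    cases l with
    | nil => rfl
    | cons t l' =>
      exfalso
      have := one_le_size t
      simp only [List.map_cons, List.sum_cons] at hsum
      omega
  · rintro rfl
    simp

lemma Ls_succ (P : CTree (Fin 2) → Prop) (n : ℕ) :
    Ls P (n+1) = ⋃ k ∈ Finset.range (n+1),
      (fun p : CTree (Fin 2) × List (CTree (Fin 2)) => p.1 :: p.2) ''
        ((Ts P (k+1)) ×ˢ (Ls P (n-k))) := by
  ext l
  simp only [Set.mem_iUnion, Set.mem_image, Set.mem_prod, Finset.mem_range, Ls, Ts,
    Set.mem_setOf_eq]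
  constructor
  · rintro ⟨hall, hsum⟩
    cases l with
    | nil => simp at hsum
    | cons t l' =>
      simp only [List.map_cons, List.sum_cons] at hsum
      have h1 : 1 ≤ t.size := one_le_size t
      refine ⟨t.size - 1, by omega, (t, l'), ⟨⟨hall t (by simp),
        by show t.size = t.size - 1 + 1; omega⟩,
        ⟨fun x hx => hall x (by simp [hx]),
        by show (l'.map CTree.size).sum = n - (t.size - 1); omega⟩⟩, rfl⟩
  · rintro ⟨k, hk, ⟨t, l'⟩, ⟨⟨hP, hs⟩, ⟨hall, hsum⟩⟩, rfl⟩
    refine ⟨?_, ?_⟩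
    · intro x hx
      rcases List.mem_cons.mp hx with rfl | h
      · exact hP
      · exact hall _ h
    · simp only [List.map_cons, List.sum_cons, hs, hsum]
      omega

lemma Ls_succ_ncard (P : CTree (Fin 2) → Prop) (n : ℕ) :
    (Ls P (n+1)).ncard = ∑ k ∈ Finset.range (n+1), (Ts P (k+1)).ncard * (Ls P (n-k)).ncard := by
  rw [Ls_succ]
  rw [ncard_biUnion]
  · refine Finset.sum_congr rfl fun k _ => ?_
    rw [Set.ncard_image_of_injective _ cons_injective, ncard_prod]
  · intro i _
    exact (((finite_Ts P (i+1)).prod (finite_Ls P (n-i)))).image _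
  · intro i _ j _ hij
    rw [Set.disjoint_left]
    rintro l ⟨⟨t, l'⟩, ⟨⟨-, hs⟩, -⟩, rfl⟩ ⟨⟨u, l''⟩, ⟨⟨-, hs'⟩, -⟩, h⟩
    apply hij
    simp only at hs hs'
    have hu : u = t := by simpa using congrArg (List.head?) h
    subst hu
    omega

end CTreeAux

namespace CTreeAux

def V (t : CTree (Fin 2)) : Prop := t.Valid M2
def V0 (t : CTree (Fin 2)) : Prop := t.Valid M2 ∧ t.color = 0

lemma valid_node0 (ts : List (CTree (Fin 2))) :
    (CTree.node (0 : Fin 2) ts).Valid M2 ↔ ∀ t ∈ ts, V t := by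
  have h0 : ∀ j : Fin 2, M2 0 j = 1 := by decide
  rw [CTree.Valid]
  exact ⟨fun h t ht => (h t ht).2, fun h t ht => ⟨h0 _, h t ht⟩⟩

lemma valid_node1 (ts : List (CTree (Fin 2))) :
    (CTree.node (1 : Fin 2) ts).Valid M2 ↔ ∀ t ∈ ts, V0 t := by
  have h0 : ∀ j : Fin 2, M2 1 j = 1 ↔ j = 0 := by decide
  rw [CTree.Valid]
  exact ⟨fun h t ht => ⟨(h t ht).2, (h0 _).mp (h t ht).1⟩,
    fun h t ht => ⟨(h0 _).mpr (h t ht).2, (h t ht).1⟩⟩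

lemma node_injective (i : Fin 2) : Function.Injective (CTree.node i) := by
  intro a b h
  simpa using h

lemma colorCount_succ (i : Fin 2) (P : CTree (Fin 2) → Prop)
    (hP : ∀ ts, (CTree.node i ts).Valid M2 ↔ ∀ t ∈ ts, P t) (n : ℕ) :
    colorCount M2 i (n+1) = (Ls P n).ncard := by
  have hset : {t : CTree (Fin 2) | t.Valid M2 ∧ t.size = n+1 ∧ t.color = i} =
      (CTree.node i) '' Ls P n := by
    ext t
    simp only [Set.mem_setOf_eq, Set.mem_image, Ls]
    constructor
    · rintro ⟨hv, hs, hc⟩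
      cases t with
      | node c ts =>
        have hc' : c = i := hc
        subst hc'
        rw [size_node] at hs
        exact ⟨ts, ⟨(hP ts).mp hv, by omega⟩, rfl⟩
    · rintro ⟨l, ⟨hall, hsum⟩, rfl⟩
      refine ⟨(hP l).mpr hall, by rw [size_node]; omega, rfl⟩
  rw [colorCount, hset, Set.ncard_image_of_injective _ (node_injective i)]

lemma colorCount_zero (i : Fin 2) : colorCount M2 i 0 = 0 := by
  have hset : {t : CTree (Fin 2) | t.Valid M2 ∧ t.size = 0 ∧ t.color = i} = ∅ := by
    ext t
    simp only [Set.mem_setOf_eq, Set.mem_empty_iff_false, iff_false, not_and]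
    intro _ hs
    have := one_le_size t
    omega
  rw [colorCount, hset, Set.ncard_empty]

lemma Ts_V0_eq (n : ℕ) :
    Ts V0 n = {t : CTree (Fin 2) | t.Valid M2 ∧ t.size = n ∧ t.color = 0} := by
  ext t
  simp only [Ts, V0, Set.mem_setOf_eq]
  tauto

lemma total_split (n : ℕ) :
    (Ts V n).ncard = colorCount M2 0 n + colorCount M2 1 n := by
  have h2 : ∀ c : Fin 2, c = 0 ∨ c = 1 := by decide
  have hset : Ts V n = {t : CTree (Fin 2) | t.Valid M2 ∧ t.size = n ∧ t.color = 0} ∪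
      {t : CTree (Fin 2) | t.Valid M2 ∧ t.size = n ∧ t.color = 1} := by
    ext t
    simp only [Ts, V, Set.mem_setOf_eq, Set.mem_union]
    rcases h2 t.color with h | h <;> tauto
  have hd : Disjoint {t : CTree (Fin 2) | t.Valid M2 ∧ t.size = n ∧ t.color = 0}
      {t : CTree (Fin 2) | t.Valid M2 ∧ t.size = n ∧ t.color = 1} := by
    rw [Set.disjoint_left]
    rintro t ⟨-, -, h0⟩ ⟨-, -, h1⟩
    rw [h0] at h1
    exact absurd h1 (by decide)
  have hf0 : {t : CTree (Fin 2) | t.Valid M2 ∧ t.size = n ∧ t.color = 0}.Finite :=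
    (finite_size_le n).subset (by rintro t ⟨-, h, -⟩; simp [Set.mem_setOf_eq, h])
  have hf1 : {t : CTree (Fin 2) | t.Valid M2 ∧ t.size = n ∧ t.color = 1}.Finite :=
    (finite_size_le n).subset (by rintro t ⟨-, h, -⟩; simp [Set.mem_setOf_eq, h])
  rw [hset, Set.ncard_union_eq hd hf0 hf1]
  rfl

end CTreeAux

namespace CTreeAux

open PowerSeries

noncomputable def Fs (i : Fin 2) : PowerSeries ℚ := PowerSeries.mk fun n => (colorCount M2 i n : ℚ)
noncomputable def LSer (P : CTree (Fin 2) → Prop) : PowerSeries ℚ :=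
  PowerSeries.mk fun n => ((Ls P n).ncard : ℚ)
noncomputable def GSer (P : CTree (Fin 2) → Prop) : PowerSeries ℚ :=
  PowerSeries.mk fun n => ((Ts P n).ncard : ℚ)

lemma GSer_zero_coeff (P : CTree (Fin 2) → Prop) : (coeff 0) (GSer P) = 0 := by
  rw [GSer, coeff_mk]
  norm_cast
  rw [Set.ncard_eq_zero (finite_Ts P 0)]
  ext t
  simp only [Ts, Set.mem_setOf_eq, Set.mem_empty_iff_false, iff_false, not_and]
  intro _
  have := one_le_size t
  omega

lemma LSer_eq (P : CTree (Fin 2) → Prop) : LSer P = 1 + GSer P * LSer P := by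
  ext n
  rw [map_add]
  cases n with
  | zero =>
    have hG := GSer_zero_coeff P
    have hL0 : (coeff 0) (LSer P) = 1 := by
      simp only [LSer, coeff_mk, Ls_zero, Set.ncard_singleton]
      norm_num
    simp only [PowerSeries.coeff_zero_eq_constantCoeff] at hG hL0 ⊢
    rw [map_mul, hG, zero_mul, add_zero, hL0, map_one]
  | succ n =>
    rw [PowerSeries.coeff_one, if_neg (Nat.succ_ne_zero n), zero_add, PowerSeries.coeff_mul,
      Finset.Nat.sum_antidiagonal_eq_sum_range_succ_mk, Finset.sum_range_succ']
    rw [GSer_zero_coeff, zero_mul, add_zero]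
    simp only [LSer, GSer, coeff_mk]
    push_cast [Ls_succ_ncard P n]
    refine Finset.sum_congr rfl fun k hk => rfl

end CTreeAux

namespace CTreeAux

open PowerSeries

lemma Fs_eq (i : Fin 2) (P : CTree (Fin 2) → Prop)
    (hP : ∀ ts, (CTree.node i ts).Valid M2 ↔ ∀ t ∈ ts, P t) :
    Fs i = X * LSer P := by
  ext n
  cases n with
  | zero =>
    rw [coeff_zero_X_mul]
    simp only [Fs, coeff_mk, colorCount_zero]
    norm_num
  | succ n =>
    rw [coeff_succ_X_mul]
    simp only [Fs, LSer, coeff_mk, colorCount_succ i P hP n]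

lemma GSer_V_eq : GSer V = Fs 0 + Fs 1 := by
  ext n
  rw [map_add]
  simp only [GSer, Fs, coeff_mk]
  push_cast [total_split n]
  ring

lemma GSer_V0_eq : GSer V0 = Fs 0 := by
  ext n
  simp only [GSer, Fs, coeff_mk, Ts_V0_eq]
  rfl

lemma key_eq0 : Fs 0 = X + (Fs 0 + Fs 1) * Fs 0 := by
  have h1 := Fs_eq 0 V valid_node0
  have h2 := LSer_eq V
  calc Fs 0 = X * LSer V := h1
  _ = X * (1 + GSer V * LSer V) := by rw [← h2]
  _ = X + GSer V * (X * LSer V) := by ring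
  _ = X + (Fs 0 + Fs 1) * Fs 0 := by rw [← h1, GSer_V_eq]

lemma key_eq1 : Fs 1 = X + Fs 0 * Fs 1 := by
  have h1 := Fs_eq 1 V0 valid_node1
  have h2 := LSer_eq V0
  calc Fs 1 = X * LSer V0 := h1
  _ = X * (1 + GSer V0 * LSer V0) := by rw [← h2]
  _ = X + GSer V0 * (X * LSer V0) := by ring
  _ = X + Fs 0 * Fs 1 := by rw [← h1, GSer_V0_eq]

end CTreeAux

namespace CTreeAux

open PowerSeries

noncomputable abbrev As : PowerSeries ℚ := Fs 0
noncomputable abbrev Ds : PowerSeries ℚ := PowerSeries.derivative ℚ As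
noncomputable abbrev Es : PowerSeries ℚ := PowerSeries.derivative ℚ Ds

lemma hB : Fs 1 = As - As^2 := by
  linear_combination key_eq1 - key_eq0

lemma hX : As * (1 - As)^2 = X := by
  have h := key_eq0
  rw [hB] at h
  linear_combination h

lemma hD : Ds * ((1 - As) * (1 - 3*As)) = 1 := by
  have h := congrArg (⇑(PowerSeries.derivative ℚ)) hX
  simp only [Derivation.leibniz, Derivation.leibniz_pow, map_sub, Derivation.map_one_eq_zero,
    derivative_X, smul_eq_mul, nsmul_eq_mul] at h
  linear_combination h

lemma d3 : (PowerSeries.derivative ℚ) (3 : PowerSeries ℚ) = 0 := by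
  rw [← map_ofNat (C (R := ℚ)) 3, derivative_C]

lemma hE : Es * ((1 - As) * (1 - 3*As)) = Ds^2 * (4 - 6*As) := by
  have h := congrArg (⇑(PowerSeries.derivative ℚ)) hD
  simp only [Derivation.leibniz, Derivation.leibniz_pow, map_sub, Derivation.map_one_eq_zero,
    derivative_X, smul_eq_mul, nsmul_eq_mul, map_one, d3] at h
  linear_combination h

end CTreeAux

namespace CTreeAux

open PowerSeries

lemma constA : constantCoeff As = 0 := by
  have : (coeff 0) As = 0 := by
    simp [Fs, coeff_mk, colorCount_zero]
  rwa [PowerSeries.coeff_zero_eq_constantCoeff] at this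

lemma unit_ne : (((1 - As) * (1 - 3*As))^3 : PowerSeries ℚ) ≠ 0 := by
  intro h
  have := congrArg (constantCoeff) h
  rw [map_pow, map_mul, map_sub, map_sub, map_one, map_mul, constA] at this
  simp at this

lemma hE3 : Es * ((1 - As) * (1 - 3*As))^3 = 4 - 6*As := by
  linear_combination ((1-As)*(1-3*As))^2 * hE + (4 - 6*As)*(Ds*((1-As)*(1-3*As)) + 1) * hD

lemma hD3 : Ds * ((1 - As) * (1 - 3*As))^3 = ((1-As)*(1-3*As))^2 := by
  linear_combination ((1-As)*(1-3*As))^2 * hD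

lemma hODE : X*(4-27*X)*Es + (2-27*X)*Ds + 3*As = 2 := by
  have key : (X*(4-27*X)*Es + (2-27*X)*Ds + 3*As - 2) * ((1 - As) * (1 - 3*As))^3 = 0 := by
    linear_combination (X*(4-27*X)) * hE3 + (2-27*X) * hD3 +
      (11 + 108*X - 84*As - 162*As*X + 216*As^2 - 216*As^3 + 81*As^4) * hX
  rcases mul_eq_zero.mp key with h | h
  · linear_combination h
  · exact absurd h unit_ne

lemma hODE3 : 4 • (X*Es) + 2 • Ds + 3 • As =
    27 • (X*(X*Es)) + 27 • (X*Ds) + 2 • (1 : PowerSeries ℚ) := by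
  simp only [nsmul_eq_mul, Nat.cast_ofNat]
  linear_combination hODE

lemma rec_a : ∀ k : ℕ, 2*((k:ℚ)+2)*(2*k+3) * coeff (k+2) As =
    3*(3*k+2)*(3*k+4) * coeff (k+1) As := by
  intro k
  have h := congrArg (coeff (k+1)) hODE3
  cases k with
  | zero =>
    simp only [map_add, map_nsmul, smul_eq_mul, coeff_succ_X_mul, coeff_zero_X_mul,
      coeff_derivative, PowerSeries.coeff_one, Nat.succ_ne_zero, if_false, mul_zero] at h
    push_cast at h ⊢
    linear_combination h
  | succ j =>
    simp only [map_add, map_nsmul, smul_eq_mul, coeff_succ_X_mul,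
      coeff_derivative, PowerSeries.coeff_one, Nat.succ_ne_zero, if_false, mul_zero] at h
    push_cast at h ⊢
    linear_combination h

end CTreeAux

namespace CTreeAux

open PowerSeries

lemma colorCount_one (i : Fin 2) : colorCount M2 i 1 = 1 := by
  have hset : {t : CTree (Fin 2) | t.Valid M2 ∧ t.size = 1 ∧ t.color = i} =
      {CTree.node i []} := by
    ext t
    simp only [Set.mem_setOf_eq, Set.mem_singleton_iff]
    constructor
    · rintro ⟨hv, hs, hc⟩
      cases t with
      | node c ts =>
        have hc' : c = i := hc
        subst hc'
        rw [size_node] at hs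
        cases ts with
        | nil => rfl
        | cons u ts' =>
          exfalso
          have := one_le_size u
          simp only [List.map_cons, List.sum_cons] at hs
          omega
    · rintro rfl
      refine ⟨?_, ?_, rfl⟩
      · rw [CTree.Valid]; intro t ht; simp at ht
      · rw [size_node]; simp
  rw [colorCount, hset, Set.ncard_singleton]

lemma a1 : coeff 1 As = 1 := by
  simp [Fs, coeff_mk, colorCount_one]

open Nat

lemma fact_pos_q (m : ℕ) : (0:ℚ) < (m ! : ℚ) := by
  exact_mod_cast Nat.factorial_pos m

lemma choose_step (j : ℕ) :
    2*(j+1)*(2*j+3)*((3*j+4).choose (j+1)) = 3*(3*j+2)*(3*j+4)*((3*j+1).choose j) := by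
  have h1 := Nat.choose_mul_factorial_mul_factorial (show j+1 ≤ 3*j+4 by omega)
  have h2 := Nat.choose_mul_factorial_mul_factorial (show j ≤ 3*j+1 by omega)
  rw [show 3*j+4 - (j+1) = 2*j+3 by omega] at h1
  rw [show 3*j+1 - j = 2*j+1 by omega] at h2
  rw [show (3*j+4)! = (3*j+4)*((3*j+3)*((3*j+2)*(3*j+1)!)) by
    rw [show 3*j+4 = 3*j+3+1 by omega, Nat.factorial_succ, show 3*j+3+1 = 3*j+4 by omega,
      show 3*j+3 = 3*j+2+1 by omega, Nat.factorial_succ, show 3*j+2+1 = 3*j+3 by omega,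
      show 3*j+2 = 3*j+1+1 by omega, Nat.factorial_succ, show 3*j+1+1 = 3*j+2 by omega]] at h1
  rw [show (2*j+3)! = (2*j+3)*((2*j+2)*(2*j+1)!) by
    rw [show 2*j+3 = 2*j+2+1 by omega, Nat.factorial_succ, show 2*j+2+1 = 2*j+3 by omega,
      show 2*j+2 = 2*j+1+1 by omega, Nat.factorial_succ, show 2*j+1+1 = 2*j+2 by omega]] at h1
  rw [Nat.factorial_succ] at h1
  have h1Q : ((3*j+4).choose (j+1) : ℚ) * ((j+1) * (j ! : ℚ)) *
      ((2*j+3)*((2*j+2)*((2*j+1)! : ℚ))) =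
      (3*j+4)*((3*j+3)*((3*j+2)*((3*j+1)! : ℚ))) := by exact_mod_cast congrArg Nat.cast h1
  have h2Q : ((3*j+1).choose j : ℚ) * (j ! : ℚ) * ((2*j+1)! : ℚ) = ((3*j+1)! : ℚ) := by
    exact_mod_cast congrArg Nat.cast h2
  have hne : ((j:ℚ)+1)*(2*j+3)*(2*j+2)*((j ! : ℚ) * ((2*j+1)! : ℚ)) ≠ 0 := by
    have p1 := fact_pos_q j
    have p2 := fact_pos_q (2*j+1)
    positivity
  have goalQ : (2*((j:ℚ)+1)*(2*j+3)*((3*j+4).choose (j+1))) =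
      3*(3*j+2)*(3*j+4)*((3*j+1).choose j) := by
    apply mul_right_cancel₀ hne
    linear_combination 2*((j:ℚ)+1)*(2*j+3)*h1Q -
      3*(3*(j:ℚ)+2)*(3*j+4)*((j:ℚ)+1)*(2*j+3)*(2*j+2)*h2Q
  exact_mod_cast goalQ

lemma main0 : ∀ k : ℕ, ((k:ℚ)+1) * coeff (k+1) As = ((3*k+1).choose k : ℚ) := by
  intro k
  induction k with
  | zero => simp [a1]
  | succ j ih =>
    rw [show 3*(j+1)+1 = 3*j+4 from by ring]
    have hrec := rec_a j
    have hcsQ : (2:ℚ)*((j:ℚ)+1)*(2*j+3)*((3*j+4).choose (j+1)) =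
        3*(3*j+2)*(3*j+4)*((3*j+1).choose j) := by exact_mod_cast congrArg Nat.cast (choose_step j)
    have h2 : (2:ℚ)*((j:ℚ)+1)*(2*j+3) ≠ 0 := by positivity
    have goal' : (2:ℚ)*((j:ℚ)+1)*(2*j+3) * (((j:ℚ)+1+1) * coeff (j+1+1) As) =
        2*((j:ℚ)+1)*(2*j+3) * (((3*j+4).choose (j+1) : ℚ)) := by
      linear_combination ((j:ℚ)+1) * hrec + 3*(3*(j:ℚ)+2)*(3*(j:ℚ)+4) * ih - hcsQ
    have := mul_left_cancel₀ h2 goal'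
    push_cast at this ⊢
    linear_combination this

end CTreeAux

namespace CTreeAux

open PowerSeries

lemma hdB : PowerSeries.derivative ℚ (Fs 1) = Ds - 2*(As*Ds) := by
  have h := congrArg (⇑(PowerSeries.derivative ℚ)) hB
  simp only [map_sub, Derivation.leibniz_pow, smul_eq_mul, nsmul_eq_mul, Nat.cast_ofNat,
    pow_one] at h
  linear_combination h

lemma hBrel : 3*(X * PowerSeries.derivative ℚ (Fs 1)) = 2*(Fs 1) + X * Ds := by
  rw [hdB]
  linear_combination -2*hB - 2*Ds*(1-3*As)*hX + 2*As*(1-As)*hD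

lemma hBrel3 : 3 • (X * PowerSeries.derivative ℚ (Fs 1)) = 2 • (Fs 1) + X * Ds := by
  simp only [nsmul_eq_mul, Nat.cast_ofNat]
  linear_combination hBrel

lemma main1 : ∀ k : ℕ, (3*(k:ℚ)+1) * coeff (k+1) (Fs 1) = ((3*k+1).choose k : ℚ) := by
  intro k
  have h := congrArg (coeff (k+1)) hBrel3
  simp only [map_add, map_nsmul, smul_eq_mul, coeff_succ_X_mul, coeff_derivative] at h
  have hm := main0 k
  push_cast at h hm ⊢
  linear_combination h + hm

end CTreeAux

/-- For the matrix `[[1,1],[1,0]]`, trees with root color 1 are counted by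
`(1/n)·C(3n-2, n-1)` and trees with root color 2 by `(1/(2n-1))·C(3n-3, n-1)`. -/
theorem stmt9 (n : ℕ) (hn : 1 ≤ n) :
    n * colorCount (!![1, 1; 1, 0] : Matrix (Fin 2) (Fin 2) ℕ) 0 n =
      (3 * n - 2).choose (n - 1) ∧
    (2 * n - 1) * colorCount (!![1, 1; 1, 0] : Matrix (Fin 2) (Fin 2) ℕ) 1 n =
      (3 * n - 3).choose (n - 1) := by
  obtain ⟨k, rfl⟩ : ∃ k, n = k + 1 := ⟨n - 1, by omega⟩
  constructor
  · have h := CTreeAux.main0 k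
    have hcoeff : PowerSeries.coeff (k+1) CTreeAux.As =
        (colorCount CTreeAux.M2 0 (k+1) : ℚ) := by
      simp [CTreeAux.Fs, PowerSeries.coeff_mk]
    rw [hcoeff] at h
    rw [show 3*(k+1)-2 = 3*k+1 by omega, show k+1-1 = k by omega]
    exact_mod_cast h
  · have h := CTreeAux.main1 k
    have hcoeff : PowerSeries.coeff (k+1) (CTreeAux.Fs 1) =
        (colorCount CTreeAux.M2 1 (k+1) : ℚ) := by
      simp [CTreeAux.Fs, PowerSeries.coeff_mk]
    rw [hcoeff] at h
    have hch := Nat.choose_mul_succ_eq (3*k) k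
    rw [show 3*k+1-k = 2*k+1 by omega] at hch
    rw [show 2*(k+1)-1 = 2*k+1 by omega, show 3*(k+1)-3 = 3*k by omega,
      show k+1-1 = k by omega]
    have h31 : ((3:ℚ)*(k:ℚ)+1) ≠ 0 := by positivity
    have hQ : ((2*k+1 : ℕ):ℚ) * (colorCount CTreeAux.M2 1 (k+1) : ℚ) =
        ((3*k).choose k : ℚ) := by
      apply mul_left_cancel₀ h31
      have hchQ : ((3*k).choose k : ℚ) * (3*(k:ℚ)+1) =
          ((3*k+1).choose k : ℚ) * (2*(k:ℚ)+1) := by exact_mod_cast congrArg Nat.cast hch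
      push_cast
      linear_combination (2*(k:ℚ)+1) * h - hchQ
    exact_mod_cast hQ
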